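/- Let A ∈ ℝ^{m×n} (m < n) and M ∈ ℝ^{m×q} (m ≤ q) with rank(A) = rank(M) = m, let y ∈ ℝ^m and τ > 0, and suppose Aᵀ satisfies the weak RSP of order k. Then for any fixed constant δ ∈ (0, τ) there exist a constant γ̄ > 0 and a positive integer n̂, depending only on (A, M, y, τ, φ, δ), such that for every x ∈ ℝⁿ there exists an optimal solution x* of the nonlinear Dantzig selector problem min{‖z‖₁ : φ(Mᵀ(Az − y)) ≤ τ} satisfying ‖x − x*‖₂ ≤ δ + 2γ̄·{ n̂·(φ(Mᵀ(Ax − y)) − τ)⁺ + 2σ_k(x)₁ + cτ + c·φ(Mᵀ(Ax − y)) }. In particular, for every x with φ(Mᵀ(Ax − y)) ≤ τ, ‖x − x*‖₂ ≤ δ + 2γ̄·{ 2σ_k(x)₁ + cτ + c·φ(Mᵀ(Ax − y)) } ≤ δ + 4γ̄·{ σ_k(x)₁ + cτ }. -/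

import Mathlib

open Matrix
open scoped Classical

/-- The ℓ₁ norm on `Fin n → ℝ`. -/
noncomputable def l1norm {n : ℕ} (x : Fin n → ℝ) : ℝ := ∑ i, |x i|

/-- The Euclidean (ℓ₂) norm on `Fin n → ℝ`. -/
noncomputable def l2norm {n : ℕ} (x : Fin n → ℝ) : ℝ := Real.sqrt (∑ i, (x i) ^ 2)

/-- The ℓ_∞ norm on `Fin n → ℝ`. -/
noncomputable def linfnorm {n : ℕ} (x : Fin n → ℝ) : ℝ := ⨆ i, |x i|

/-- The best `k`-term approximation error `σ_k(x)₁`. -/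
noncomputable def bestKTerm {n : ℕ} (k : ℕ) (x : Fin n → ℝ) : ℝ :=
  sInf {t : ℝ | ∃ u : Fin n → ℝ,
    (Finset.univ.filter (fun i => u i ≠ 0)).card ≤ k ∧ t = l1norm (x - u)}

/-- `Aᵀ` satisfies the weak range space property of order `k`. -/
def WeakRSP {m n : ℕ} (A : Matrix (Fin m) (Fin n) ℝ) (k : ℕ) : Prop :=
  ∀ S₁ S₂ : Finset (Fin n), Disjoint S₁ S₂ → S₁.card + S₂.card ≤ k →
    ∃ u : Fin m → ℝ,
      (∀ i ∈ S₁, Aᵀ.mulVec u i = 1) ∧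
      (∀ i ∈ S₂, Aᵀ.mulVec u i = -1) ∧
      (∀ i, i ∉ S₁ → i ∉ S₂ → |Aᵀ.mulVec u i| ≤ 1)

/-- The induced `∞→1` operator norm. -/
noncomputable def opNormInfToOne {a b : ℕ} (Q : Matrix (Fin a) (Fin b) ℝ) : ℝ :=
  sSup {t : ℝ | ∃ x : Fin b → ℝ, linfnorm x ≤ 1 ∧ t = l1norm (Q.mulVec x)}

/-- The constant `c` of Theorem 3.2. -/
noncomputable def cConst {m n q : ℕ} (M : Matrix (Fin m) (Fin q) ℝ)
    (A : Matrix (Fin m) (Fin n) ℝ) : ℝ :=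
  sSup {t : ℝ | ∃ g : Fin m → Fin q, Function.Injective g ∧
    IsUnit (M.submatrix id g) ∧
    t = opNormInfToOne ((M.submatrix id g)⁻¹ * (A * Aᵀ)⁻¹ * A)}

/-- `φ` is a norm on `Fin q → ℝ`. -/
structure IsNorm {q : ℕ} (φ : (Fin q → ℝ) → ℝ) : Prop where
  nonneg : ∀ x, 0 ≤ φ x
  eq_zero_iff : ∀ x, φ x = 0 ↔ x = 0
  smul_eq : ∀ (c : ℝ) (x), φ (c • x) = |c| * φ x
  triangle : ∀ x y, φ (x + y) ≤ φ x + φ y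

/-- The dual norm `φ*(u) = sup {uᵀx : φ(x) ≤ 1}`. -/
noncomputable def dualNorm {q : ℕ} (φ : (Fin q → ℝ) → ℝ) (u : Fin q → ℝ) : ℝ :=
  sSup {t : ℝ | ∃ x : Fin q → ℝ, φ x ≤ 1 ∧ t = ∑ i, u i * x i}

/-- The `i`-th standard basis vector of `ℝ^q`. -/
def stdBasis {q : ℕ} (i : Fin q) : Fin q → ℝ := fun j => if j = i then 1 else 0

lemma l1_nonneg {n : ℕ} (x : Fin n → ℝ) : 0 ≤ l1norm x :=
  Finset.sum_nonneg fun _ _ => abs_nonneg _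

lemma l1_zero {n : ℕ} : l1norm (0 : Fin n → ℝ) = 0 := by simp [l1norm]

lemma l1_eq_zero {n : ℕ} {x : Fin n → ℝ} (h : l1norm x = 0) : x = 0 := by
  funext i
  have := (Finset.sum_eq_zero_iff_of_nonneg (fun i _ => abs_nonneg (x i))).mp h i (Finset.mem_univ i)
  simpa using this

lemma abs_le_l1 {n : ℕ} (x : Fin n → ℝ) (i : Fin n) : |x i| ≤ l1norm x :=
  Finset.single_le_sum (fun j _ => abs_nonneg (x j)) (Finset.mem_univ i)

lemma l1_smul {n : ℕ} (c : ℝ) (x : Fin n → ℝ) : l1norm (c • x) = |c| * l1norm x := by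
  simp [l1norm, abs_mul, Finset.mul_sum]

lemma l1_neg_sub {n : ℕ} (x u : Fin n → ℝ) : l1norm (u - x) = l1norm (x - u) := by
  simp only [l1norm]
  congr 1; funext i; simp [Pi.sub_apply, abs_sub_comm]

lemma l2_nonneg {n : ℕ} (x : Fin n → ℝ) : 0 ≤ l2norm x := Real.sqrt_nonneg _

lemma l2_eq_norm {n : ℕ} (x : Fin n → ℝ) :
    l2norm x = ‖(WithLp.equiv 2 (Fin n → ℝ)).symm x‖ := by
  rw [EuclideanSpace.norm_eq]
  simp [l2norm, Real.norm_eq_abs, sq_abs]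

lemma l2_triangle {n : ℕ} (x y : Fin n → ℝ) : l2norm (x + y) ≤ l2norm x + l2norm y := by
  rw [l2_eq_norm, l2_eq_norm, l2_eq_norm]
  exact norm_add_le _ _

lemma l2_zero {n : ℕ} : l2norm (0 : Fin n → ℝ) = 0 := by simp [l2norm]

lemma l2_eq_zero {n : ℕ} {x : Fin n → ℝ} (h : l2norm x = 0) : x = 0 := by
  rw [l2_eq_norm] at h
  have := norm_eq_zero.mp h
  funext i; exact congrFun (by simpa using this : x = 0) i

lemma l2_smul {n : ℕ} (c : ℝ) (x : Fin n → ℝ) : l2norm (c • x) = |c| * l2norm x := by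
  rw [l2_eq_norm, l2_eq_norm]
  have : (WithLp.equiv 2 (Fin n → ℝ)).symm (c • x) = c • (WithLp.equiv 2 (Fin n → ℝ)).symm x := rfl
  rw [this, norm_smul, Real.norm_eq_abs]

lemma l2_le_l1 {n : ℕ} (x : Fin n → ℝ) : l2norm x ≤ l1norm x := by
  rw [l2norm]
  have h : ∑ i, (x i) ^ 2 ≤ (l1norm x) ^ 2 := by
    have h1 : ∀ i ∈ Finset.univ, (x i) ^ 2 ≤ |x i| * l1norm x := by
      intro i _
      have : (x i) ^ 2 = |x i| * |x i| := by rw [← abs_mul, abs_mul_self, sq]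
      rw [this]
      exact mul_le_mul_of_nonneg_left (abs_le_l1 x i) (abs_nonneg _)
    calc ∑ i, (x i) ^ 2 ≤ ∑ i, |x i| * l1norm x := Finset.sum_le_sum h1
      _ = (l1norm x) ^ 2 := by rw [← Finset.sum_mul, l1norm, sq]
  calc Real.sqrt (∑ i, (x i) ^ 2) ≤ Real.sqrt ((l1norm x) ^ 2) := Real.sqrt_le_sqrt h
    _ = |l1norm x| := Real.sqrt_sq_eq_abs _
    _ = l1norm x := abs_of_nonneg (l1_nonneg x)

lemma abs_le_l2 {n : ℕ} (x : Fin n → ℝ) (i : Fin n) : |x i| ≤ l2norm x := by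
  rw [l2norm, ← Real.sqrt_sq_eq_abs]
  apply Real.sqrt_le_sqrt
  exact Finset.single_le_sum (fun j _ => sq_nonneg (x j)) (Finset.mem_univ i)

section best
variable {n : ℕ} (k : ℕ) (x : Fin n → ℝ)

lemma bestK_set_nonempty : ∃ t, t ∈ {t : ℝ | ∃ u : Fin n → ℝ,
    (Finset.univ.filter (fun i => u i ≠ 0)).card ≤ k ∧ t = l1norm (x - u)} :=
  ⟨l1norm (x - 0), ⟨0, by simp, rfl⟩⟩

lemma bestK_bddBelow : BddBelow {t : ℝ | ∃ u : Fin n → ℝ,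
    (Finset.univ.filter (fun i => u i ≠ 0)).card ≤ k ∧ t = l1norm (x - u)} := by
  refine ⟨0, fun t ht => ?_⟩
  obtain ⟨u, _, rfl⟩ := ht
  exact l1_nonneg _

lemma bestK_nonneg : 0 ≤ bestKTerm k x :=
  le_csInf (bestK_set_nonempty k x) (fun t ht => by obtain ⟨u, _, rfl⟩ := ht; exact l1_nonneg _)

lemma bestK_exists_near : ∃ u : Fin n → ℝ,
    (Finset.univ.filter (fun i => u i ≠ 0)).card ≤ k ∧
    l1norm (x - u) ≤ bestKTerm k x + 1 := by
  have h : sInf {t : ℝ | ∃ u : Fin n → ℝ,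
      (Finset.univ.filter (fun i => u i ≠ 0)).card ≤ k ∧ t = l1norm (x - u)}
      < bestKTerm k x + 1 := by
    rw [bestKTerm]; linarith
  obtain ⟨t, ht, htlt⟩ := exists_lt_of_csInf_lt ⟨_, (bestK_set_nonempty k x).choose_spec⟩ h
  obtain ⟨u, hu, rfl⟩ := ht
  exact ⟨u, hu, le_of_lt htlt⟩

lemma bestK_zero_eq (x : Fin n → ℝ) : bestKTerm 0 x = l1norm x := by
  have : {t : ℝ | ∃ u : Fin n → ℝ,
      (Finset.univ.filter (fun i => u i ≠ 0)).card ≤ 0 ∧ t = l1norm (x - u)} = {l1norm x} := by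
    ext t
    constructor
    · rintro ⟨u, hu, rfl⟩
      have hu0 : u = 0 := by
        funext i
        show u i = 0
        by_contra hne
        have : i ∈ Finset.univ.filter (fun i => u i ≠ 0) := by simp [hne]
        have := Finset.card_pos.mpr ⟨i, this⟩
        omega
      simp [hu0]
    · rintro rfl
      exact ⟨0, by simp, by simp⟩
  rw [bestKTerm, this, csInf_singleton]
end best

section phi
variable {q : ℕ} {φ : (Fin q → ℝ) → ℝ} (hφ : IsNorm φ)

lemma phi_zero (hφ : IsNorm φ) : φ 0 = 0 := (hφ.eq_zero_iff 0).mpr rfl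

lemma phi_sum_le (hφ : IsNorm φ) {ι : Type*} (s : Finset ι) (f : ι → Fin q → ℝ) :
    φ (∑ i ∈ s, f i) ≤ ∑ i ∈ s, φ (f i) := by
  classical
  induction s using Finset.induction_on with
  | empty => simp [phi_zero hφ]
  | insert _ _ hni ih =>
    rw [Finset.sum_insert hni, Finset.sum_insert hni]
    exact le_trans (hφ.triangle _ _) (by linarith)

lemma phi_le_l1 (hφ : IsNorm φ) (hbasis : ∀ i : Fin q, φ (stdBasis i) = 1) (x : Fin q → ℝ) :
    φ x ≤ l1norm x := by
  have hx : x = ∑ i, x i • stdBasis i := by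
    funext j
    simp only [Finset.sum_apply, Pi.smul_apply, smul_eq_mul, _root_.stdBasis]
    rw [Finset.sum_congr rfl (g := fun i => if j = i then x i else 0)
      (fun i _ => by split <;> simp_all)]
    simp
  calc φ x = φ (∑ i, x i • stdBasis i) := by rw [← hx]
    _ ≤ ∑ i, φ (x i • stdBasis i) := phi_sum_le hφ _ _
    _ = ∑ i, |x i| := by
        congr 1; funext i; rw [hφ.smul_eq, hbasis i, mul_one]
    _ = l1norm x := rfl

lemma phi_abs_le (hφ : IsNorm φ) (hdbasis : ∀ i : Fin q, dualNorm φ (stdBasis i) = 1)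
    (x : Fin q → ℝ) (i : Fin q) : |x i| ≤ φ x := by
  -- the set defining the dual norm at stdBasis i
  set D : Set ℝ := {t : ℝ | ∃ v : Fin q → ℝ, φ v ≤ 1 ∧ t = ∑ j, stdBasis i j * v j} with hD
  have hDmem : ∀ v : Fin q → ℝ, φ v ≤ 1 → v i ∈ D := by
    intro v hv
    refine ⟨v, hv, ?_⟩
    simp only [_root_.stdBasis, ite_mul, one_mul, zero_mul]
    rw [Finset.sum_congr rfl (g := fun j => if j = i then v j else 0)
      (fun j _ => by split <;> simp_all)]
    simp
  have hsup : sSup D = 1 := hdbasis i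
  have hbdd : BddAbove D := by
    by_contra hnb
    rw [Real.sSup_of_not_bddAbove hnb] at hsup
    norm_num at hsup
  have key : ∀ v : Fin q → ℝ, φ v ≤ 1 → v i ≤ 1 := by
    intro v hv
    have := le_csSup hbdd (hDmem v hv)
    rwa [hsup] at this
  rcases eq_or_ne (φ x) 0 with h0 | h0
  · have : x = 0 := (hφ.eq_zero_iff x).mp h0
    simp [this, h0, phi_zero hφ]
  · have hpos : 0 < φ x := lt_of_le_of_ne (hφ.nonneg x) (Ne.symm h0)
    have h1 : φ ((φ x)⁻¹ • x) ≤ 1 := by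
      rw [hφ.smul_eq, abs_of_pos (by positivity)]
      rw [inv_mul_cancel₀ h0]
    have h2 : φ ((φ x)⁻¹ • (-x)) ≤ 1 := by
      have h3 : (φ x)⁻¹ • (-x) = (-(φ x)⁻¹) • x := by
        funext j; simp [neg_mul, mul_neg]
      rw [h3, hφ.smul_eq, abs_neg, abs_of_pos (by positivity), inv_mul_cancel₀ h0]
    have k1 := key _ h1
    have k2 := key _ h2
    simp only [Pi.smul_apply, smul_eq_mul, Pi.neg_apply] at k1 k2
    have hx1 : x i ≤ φ x := by
      have := mul_le_mul_of_nonneg_left k1 hpos.le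
      rw [← mul_assoc, mul_inv_cancel₀ h0, one_mul, mul_one] at this
      exact this
    have hx2 : -x i ≤ φ x := by
      have := mul_le_mul_of_nonneg_left k2 hpos.le
      rw [← mul_assoc, mul_inv_cancel₀ h0, one_mul, mul_one] at this
      exact this
    rw [abs_le]
    exact ⟨by linarith, hx1⟩
end phi

lemma linf_zero {n : ℕ} : linfnorm (0 : Fin n → ℝ) = 0 := by
  rcases Nat.eq_zero_or_pos n with h | h
  · subst h
    rw [linfnorm]
    exact Real.iSup_of_isEmpty _
  · haveI : Nonempty (Fin n) := ⟨⟨0, h⟩⟩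
    rw [linfnorm]
    have : ∀ i : Fin n, |(0 : Fin n → ℝ) i| = 0 := by simp
    simp only [this]
    exact ciSup_const (α := ℝ) (ι := Fin n) (a := 0)

lemma abs_le_linf {n : ℕ} (x : Fin n → ℝ) (i : Fin n) : |x i| ≤ linfnorm x :=
  le_ciSup (f := fun i => |x i|) (Set.Finite.bddAbove (Set.finite_range _)) i

lemma linf_le_one_of {n : ℕ} {x : Fin n → ℝ} (h : ∀ i, |x i| ≤ 1) : linfnorm x ≤ 1 := by
  rcases Nat.eq_zero_or_pos n with h0 | h0
  · subst h0; rw [linfnorm, Real.iSup_of_isEmpty]; norm_num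
  · haveI : Nonempty (Fin n) := ⟨⟨0, h0⟩⟩
    exact ciSup_le h

lemma opNorm_nonneg {a b : ℕ} (Q : Matrix (Fin a) (Fin b) ℝ) : 0 ≤ opNormInfToOne Q := by
  rcases isEmpty_or_nonempty (Fin b) with hb | hb
  · -- then any x works; x = 0
    apply le_csSup
    · refine ⟨∑ i, ∑ j, |Q i j|, fun t ht => ?_⟩
      obtain ⟨x, hx, rfl⟩ := ht
      calc l1norm (Q.mulVec x) = ∑ i, |∑ j, Q i j * x j| := rfl
        _ ≤ ∑ i, ∑ j, |Q i j * x j| := Finset.sum_le_sum (fun i _ => Finset.abs_sum_le_sum_abs _ _)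
        _ ≤ ∑ i, ∑ j, |Q i j| := by
            apply Finset.sum_le_sum; intro i _
            apply Finset.sum_le_sum; intro j _
            rw [abs_mul]
            calc |Q i j| * |x j| ≤ |Q i j| * 1 :=
              mul_le_mul_of_nonneg_left (le_trans (abs_le_linf x j) hx) (abs_nonneg _)
              _ = |Q i j| := mul_one _
    · exact ⟨0, by rw [linf_zero]; norm_num, by rw [Matrix.mulVec_zero, l1_zero]⟩
  · apply le_csSup
    · refine ⟨∑ i, ∑ j, |Q i j|, fun t ht => ?_⟩
      obtain ⟨x, hx, rfl⟩ := ht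
      calc l1norm (Q.mulVec x) = ∑ i, |∑ j, Q i j * x j| := rfl
        _ ≤ ∑ i, ∑ j, |Q i j * x j| := Finset.sum_le_sum (fun i _ => Finset.abs_sum_le_sum_abs _ _)
        _ ≤ ∑ i, ∑ j, |Q i j| := by
            apply Finset.sum_le_sum; intro i _
            apply Finset.sum_le_sum; intro j _
            rw [abs_mul]
            calc |Q i j| * |x j| ≤ |Q i j| * 1 :=
              mul_le_mul_of_nonneg_left (le_trans (abs_le_linf x j) hx) (abs_nonneg _)
              _ = |Q i j| := mul_one _
    · exact ⟨0, by rw [linf_zero]; norm_num, by rw [Matrix.mulVec_zero, l1_zero]⟩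

lemma cConst_nonneg {m n q : ℕ} (M : Matrix (Fin m) (Fin q) ℝ)
    (A : Matrix (Fin m) (Fin n) ℝ) : 0 ≤ cConst M A := by
  rw [cConst]
  rcases Set.eq_empty_or_nonempty {t : ℝ | ∃ g : Fin m → Fin q, Function.Injective g ∧
      IsUnit (M.submatrix id g) ∧
      t = opNormInfToOne ((M.submatrix id g)⁻¹ * (A * Aᵀ)⁻¹ * A)} with h | h
  · rw [h, Real.sSup_empty]
  · apply Real.sSup_nonneg
    rintro t ⟨g, _, _, rfl⟩
    exact opNorm_nonneg _

lemma cauchy_schwarz_sum {n : ℕ} (u v : Fin n → ℝ) :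
    ∑ i, u i * v i ≤ l2norm u * l2norm v := by
  have h := Finset.sum_mul_sq_le_sq_mul_sq Finset.univ u v
  have h2 : (∑ i, u i * v i) ≤ |∑ i, u i * v i| := le_abs_self _
  calc ∑ i, u i * v i ≤ |∑ i, u i * v i| := h2
    _ = Real.sqrt ((∑ i, u i * v i) ^ 2) := (Real.sqrt_sq_eq_abs _).symm
    _ ≤ Real.sqrt ((∑ i, u i ^ 2) * ∑ i, v i ^ 2) := Real.sqrt_le_sqrt h
    _ = l2norm u * l2norm v := by
        rw [Real.sqrt_mul (Finset.sum_nonneg fun i _ => sq_nonneg _)]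
        rfl

lemma l2_mulVec_le {m n : ℕ} (A : Matrix (Fin m) (Fin n) ℝ) (v : Fin n → ℝ) :
    l2norm (A.mulVec v) ≤ (∑ i, ∑ j, |A i j|) * l1norm v := by
  calc l2norm (A.mulVec v) ≤ l1norm (A.mulVec v) := l2_le_l1 _
    _ = ∑ i, |∑ j, A i j * v j| := rfl
    _ ≤ ∑ i, ∑ j, |A i j * v j| := Finset.sum_le_sum (fun i _ => Finset.abs_sum_le_sum_abs _ _)
    _ ≤ ∑ i, ∑ j, |A i j| * l1norm v := by
        apply Finset.sum_le_sum; intro i _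
        apply Finset.sum_le_sum; intro j _
        rw [abs_mul]
        exact mul_le_mul_of_nonneg_left (abs_le_l1 v j) (abs_nonneg _)
    _ = (∑ i, ∑ j, |A i j|) * l1norm v := by simp_rw [Finset.sum_mul]

lemma sum_abs_nonneg {m n : ℕ} (A : Matrix (Fin m) (Fin n) ℝ) :
    (0:ℝ) ≤ ∑ i, ∑ j, |A i j| :=
  Finset.sum_nonneg fun i _ => Finset.sum_nonneg fun j _ => abs_nonneg _

lemma exists_sparse_bound {m n k : ℕ} (A : Matrix (Fin m) (Fin n) ℝ) (hRSP : WeakRSP A k) :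
    ∃ Cs : ℝ, 1 ≤ Cs ∧ ∀ v : Fin n → ℝ,
      (Finset.univ.filter (fun i => v i ≠ 0)).card ≤ k →
      l1norm v ≤ Cs * l2norm (A.mulVec v) := by
  set U : Finset (Fin n) × Finset (Fin n) → (Fin m → ℝ) := fun p =>
    if h : Disjoint p.1 p.2 ∧ p.1.card + p.2.card ≤ k
    then (hRSP p.1 p.2 h.1 h.2).choose else 0 with hU
  refine ⟨1 + ∑ p : Finset (Fin n) × Finset (Fin n), l2norm (U p), ?_, ?_⟩
  · have : (0:ℝ) ≤ ∑ p : Finset (Fin n) × Finset (Fin n), l2norm (U p) :=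
      Finset.sum_nonneg fun p _ => l2_nonneg _
    linarith
  · intro v hv
    set S₁ : Finset (Fin n) := Finset.univ.filter (fun i => 0 < v i) with hS₁
    set S₂ : Finset (Fin n) := Finset.univ.filter (fun i => v i < 0) with hS₂
    have hdis : Disjoint S₁ S₂ := by
      rw [Finset.disjoint_left]
      intro i hi1 hi2
      rw [hS₁, Finset.mem_filter] at hi1
      rw [hS₂, Finset.mem_filter] at hi2
      exact absurd hi2.2 (not_lt.mpr (le_of_lt hi1.2))
    have hunion : S₁ ∪ S₂ = Finset.univ.filter (fun i => v i ≠ 0) := by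
      ext i
      simp only [hS₁, hS₂, Finset.mem_union, Finset.mem_filter, Finset.mem_univ, true_and]
      constructor
      · rintro (h | h) <;> intro h0 <;> rw [h0] at h <;> exact lt_irrefl 0 h
      · intro h
        rcases lt_trichotomy (v i) 0 with h' | h' | h'
        · exact Or.inr h'
        · exact absurd h' h
        · exact Or.inl h'
    have hcard : S₁.card + S₂.card ≤ k := by
      rw [← Finset.card_union_of_disjoint hdis, hunion]
      exact hv
    have hcond : Disjoint S₁ S₂ ∧ S₁.card + S₂.card ≤ k := ⟨hdis, hcard⟩
    have hu : U (S₁, S₂) = (hRSP S₁ S₂ hdis hcard).choose := by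
      rw [hU]; simp only []
      rw [dif_pos hcond]
    obtain ⟨h1, h2, h3⟩ := (hRSP S₁ S₂ hdis hcard).choose_spec
    set u := (hRSP S₁ S₂ hdis hcard).choose with hu'
    have key1 : l1norm v = ∑ i, Aᵀ.mulVec u i * v i := by
      rw [l1norm]
      apply Finset.sum_congr rfl
      intro i _
      by_cases hi1 : i ∈ S₁
      · rw [h1 i hi1, one_mul]
        rw [hS₁, Finset.mem_filter] at hi1
        exact abs_of_pos hi1.2
      · by_cases hi2 : i ∈ S₂
        · rw [h2 i hi2, neg_one_mul]
          rw [hS₂, Finset.mem_filter] at hi2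
          exact abs_of_neg hi2.2
        · have hv0 : v i = 0 := by
            rw [hS₁, Finset.mem_filter] at hi1
            rw [hS₂, Finset.mem_filter] at hi2
            push_neg at hi1 hi2
            have := hi1 (Finset.mem_univ i)
            have := hi2 (Finset.mem_univ i)
            linarith
          rw [hv0, mul_zero, abs_zero]
    have key2 : ∑ i, Aᵀ.mulVec u i * v i = ∑ j, u j * A.mulVec v j := by
      simp only [Matrix.mulVec, dotProduct, Matrix.transpose_apply]
      simp_rw [Finset.sum_mul, Finset.mul_sum]
      rw [Finset.sum_comm]
      apply Finset.sum_congr rfl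
      intro j _
      apply Finset.sum_congr rfl
      intro i _
      ring
    have key3 : ∑ j, u j * A.mulVec v j ≤ l2norm u * l2norm (A.mulVec v) :=
      cauchy_schwarz_sum u (A.mulVec v)
    have hle : l2norm u ≤ 1 + ∑ p : Finset (Fin n) × Finset (Fin n), l2norm (U p) := by
      have h4 : l2norm (U (S₁, S₂)) ≤ ∑ p : Finset (Fin n) × Finset (Fin n), l2norm (U p) :=
        Finset.single_le_sum (fun p _ => l2_nonneg (U p)) (Finset.mem_univ (S₁, S₂))
      rw [hu] at h4
      linarith
    calc l1norm v = ∑ j, u j * A.mulVec v j := by rw [key1, key2]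
      _ ≤ l2norm u * l2norm (A.mulVec v) := key3
      _ ≤ (1 + ∑ p : Finset (Fin n) × Finset (Fin n), l2norm (U p)) * l2norm (A.mulVec v) :=
          mul_le_mul_of_nonneg_right hle (l2_nonneg _)

lemma l2_continuous {n : ℕ} : Continuous (l2norm (n := n)) := by
  apply Real.continuous_sqrt.comp
  exact continuous_finset_sum _ (fun i _ => (continuous_apply i).pow 2)

lemma l1_continuous {n : ℕ} : Continuous (l1norm (n := n)) :=
  continuous_finset_sum _ (fun i _ => (continuous_apply i).abs)

lemma stdBasis_l2 {n : ℕ} (i : Fin n) : l2norm (stdBasis i) = 1 := by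
  rw [l2norm]
  have : ∑ j, (stdBasis i j)^2 = 1 := by
    rw [Finset.sum_eq_single i (fun j _ hji => by simp [_root_.stdBasis, hji])
      (fun h => absurd (Finset.mem_univ i) h)]
    simp [_root_.stdBasis]
  rw [this, Real.sqrt_one]

lemma mulVecT_lower_bound {m q : ℕ} (M : Matrix (Fin m) (Fin q) ℝ) (hm : 0 < m)
    (hMrank : M.rank = m) :
    ∃ β : ℝ, 0 < β ∧ ∀ w : Fin m → ℝ, β * l2norm w ≤ l1norm (Mᵀ.mulVec w) := by
  -- injectivity of w ↦ Mᵀ w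
  have hinj : Function.Injective (Mᵀ.mulVec) := by
    have h1 : Mᵀ.rank = m := by rw [Matrix.rank_transpose]; exact hMrank
    have h2 : Module.finrank ℝ (LinearMap.range (Mᵀ.mulVecLin)) = m := h1
    have h3 := LinearMap.finrank_range_add_finrank_ker (Mᵀ.mulVecLin)
    rw [h2] at h3
    have h4 : Module.finrank ℝ (Fin m → ℝ) = m := by
      rw [Module.finrank_fin_fun]
    rw [h4] at h3
    have h5 : Module.finrank ℝ (LinearMap.ker (Mᵀ.mulVecLin)) = 0 := by omega
    have h6 : LinearMap.ker (Mᵀ.mulVecLin) = ⊥ := Submodule.finrank_eq_zero.mp h5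
    have h7 := LinearMap.ker_eq_bot.mp h6
    exact h7
  set f : (Fin m → ℝ) → ℝ := fun w => l1norm (Mᵀ.mulVec w) with hf
  have hfc : Continuous f := by
    have hfeq : f = fun w => ∑ i, |∑ j, Mᵀ i j * w j| := by
      funext w
      simp [hf, l1norm, Matrix.mulVec, dotProduct]
    rw [hfeq]
    exact continuous_finset_sum _ (fun i _ =>
      (continuous_finset_sum _ (fun j _ => continuous_const.mul (continuous_apply j))).abs)
  set Sph : Set (Fin m → ℝ) := {w | l2norm w = 1} with hSph
  have hclosed : IsClosed Sph := isClosed_eq l2_continuous continuous_const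
  have hsub : Sph ⊆ Metric.closedBall 0 1 := by
    intro w hw
    rw [Metric.mem_closedBall, dist_zero_right]
    rw [pi_norm_le_iff_of_nonneg (by norm_num)]
    intro i
    rw [Real.norm_eq_abs]
    calc |w i| ≤ l2norm w := abs_le_l2 w i
      _ = 1 := hw
  have hcomp : IsCompact Sph :=
    IsCompact.of_isClosed_subset (isCompact_closedBall 0 1) hclosed hsub
  have hne : Sph.Nonempty := ⟨stdBasis ⟨0, hm⟩, stdBasis_l2 _⟩
  obtain ⟨w₀, hw₀, hmin⟩ := hcomp.exists_isMinOn hne hfc.continuousOn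
  have hβpos : 0 < f w₀ := by
    rcases lt_or_eq_of_le (l1_nonneg (Mᵀ.mulVec w₀)) with h | h
    · exact h
    · exfalso
      have h0 : Mᵀ.mulVec w₀ = 0 := l1_eq_zero h.symm
      have : Mᵀ.mulVec w₀ = Mᵀ.mulVec 0 := by rw [h0, Matrix.mulVec_zero]
      have hw00 : w₀ = 0 := hinj this
      rw [hSph] at hw₀
      simp only [Set.mem_setOf_eq] at hw₀
      rw [hw00, l2_zero] at hw₀
      norm_num at hw₀
  refine ⟨f w₀, hβpos, fun w => ?_⟩
  rcases eq_or_ne w 0 with rfl | hw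
  · rw [l2_zero, mul_zero]
    exact l1_nonneg _
  · have hr : 0 < l2norm w := by
      rcases lt_or_eq_of_le (l2_nonneg w) with h | h
      · exact h
      · exact absurd (l2_eq_zero h.symm) hw
    set r := l2norm w with hrdef
    have hmem : (r⁻¹ • w) ∈ Sph := by
      rw [hSph]
      simp only [Set.mem_setOf_eq]
      rw [l2_smul, abs_of_pos (by positivity), ← hrdef, inv_mul_cancel₀ (ne_of_gt hr)]
    have hthis : f w₀ ≤ f (r⁻¹ • w) := hmin hmem
    have hfw : f (r⁻¹ • w) = r⁻¹ * f w := by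
      rw [hf]
      simp only []
      rw [Matrix.mulVec_smul]
      rw [l1_smul]
      rw [abs_of_pos (by positivity)]
    rw [hfw] at hthis
    show f w₀ * r ≤ f w
    calc f w₀ * r ≤ (r⁻¹ * f w) * r := mul_le_mul_of_nonneg_right hthis hr.le
      _ = f w := by field_simp

lemma phi_lipschitz {q : ℕ} {φ : (Fin q → ℝ) → ℝ} (hφ : IsNorm φ)
    (hbasis : ∀ i : Fin q, φ (stdBasis i) = 1) (a b : Fin q → ℝ) :
    |φ a - φ b| ≤ l1norm (a - b) := by
  have h1 : φ a ≤ φ (a - b) + φ b := by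
    have : a = (a - b) + b := by ring
    calc φ a = φ ((a - b) + b) := by rw [← this]
      _ ≤ φ (a - b) + φ b := hφ.triangle _ _
  have h2 : φ b ≤ φ (a - b) + φ a := by
    have hneg : b - a = (-1 : ℝ) • (a - b) := by simp [neg_sub]
    have : φ (b - a) = φ (a - b) := by rw [hneg, hφ.smul_eq]; norm_num
    have hb : b = (b - a) + a := by ring
    calc φ b = φ ((b - a) + a) := by rw [← hb]
      _ ≤ φ (b - a) + φ a := hφ.triangle _ _
      _ = φ (a - b) + φ a := by rw [this]
  have h3 : φ (a - b) ≤ l1norm (a - b) := phi_le_l1 hφ hbasis _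
  rw [abs_le]
  constructor <;> linarith

lemma phi_continuous {q : ℕ} {φ : (Fin q → ℝ) → ℝ} (hφ : IsNorm φ)
    (hbasis : ∀ i : Fin q, φ (stdBasis i) = 1) : Continuous φ := by
  rw [Metric.continuous_iff]
  intro a ε hε
  refine ⟨ε / (q + 1), by positivity, fun b hb => ?_⟩
  rw [Real.dist_eq]
  calc |φ b - φ a| ≤ l1norm (b - a) := phi_lipschitz hφ hbasis b a
    _ = ∑ i, |(b - a) i| := rfl
    _ ≤ ∑ _i : Fin q, dist b a := by
        apply Finset.sum_le_sum
        intro i _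
        calc |(b - a) i| = ‖(b - a) i‖ := rfl
          _ ≤ ‖b - a‖ := norm_le_pi_norm _ i
          _ = dist b a := (dist_eq_norm b a).symm
    _ = q * dist b a := by rw [Finset.sum_const, Finset.card_univ, Fintype.card_fin]; ring
    _ < ε := by
        have hq1 : (0:ℝ) < (q:ℝ) + 1 := by positivity
        calc (q:ℝ) * dist b a ≤ q * (ε / (q+1)) :=
              mul_le_mul_of_nonneg_left (le_of_lt hb) (Nat.cast_nonneg q)
          _ = ((q:ℝ)/(q+1)) * ε := by ring
          _ < ε := by
              have h3 : (q:ℝ)/(q+1) < 1 := (div_lt_one hq1).mpr (by linarith)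
              nlinarith

lemma exists_optimal {m n q : ℕ} (A : Matrix (Fin m) (Fin n) ℝ) (M : Matrix (Fin m) (Fin q) ℝ)
    (hArank : A.rank = m) (y : Fin m → ℝ) (τ : ℝ) (hτ : 0 < τ)
    (φ : (Fin q → ℝ) → ℝ) (hφ : IsNorm φ) (hbasis : ∀ i : Fin q, φ (stdBasis i) = 1) :
    ∃ xstar : Fin n → ℝ, (φ (Mᵀ.mulVec (A.mulVec xstar - y)) ≤ τ ∧
      ∀ z : Fin n → ℝ, φ (Mᵀ.mulVec (A.mulVec z - y)) ≤ τ → l1norm xstar ≤ l1norm z) := by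
  -- feasible point
  have hsurj : ∃ z₀ : Fin n → ℝ, A.mulVec z₀ = y := by
    have h1 : LinearMap.range (A.mulVecLin) = ⊤ := by
      apply Submodule.eq_top_of_finrank_eq
      rw [Module.finrank_fin_fun]
      exact hArank
    have : y ∈ LinearMap.range (A.mulVecLin) := by rw [h1]; trivial
    obtain ⟨z₀, hz₀⟩ := this
    exact ⟨z₀, hz₀⟩
  obtain ⟨z₀, hz₀⟩ := hsurj
  set ψ : (Fin n → ℝ) → ℝ := fun z => φ (Mᵀ.mulVec (A.mulVec z - y)) with hψ
  have hψz₀ : ψ z₀ ≤ τ := by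
    rw [hψ]
    simp only []
    rw [hz₀, sub_self, Matrix.mulVec_zero, phi_zero hφ]
    exact hτ.le
  have hψc : Continuous ψ := by
    have hψeq : ψ = fun z => φ (fun i => ∑ j, Mᵀ i j * ((∑ l, A j l * z l) - y j)) := by
      funext z
      rw [hψ]
      simp only []
      congr 1
    rw [hψeq]
    exact (phi_continuous hφ hbasis).comp
      (continuous_pi (fun i => continuous_finset_sum _ (fun j _ =>
        continuous_const.mul ((continuous_finset_sum _ (fun l _ =>
          continuous_const.mul (continuous_apply l))).sub continuous_const))))
  set K : Set (Fin n → ℝ) := {z | ψ z ≤ τ} ∩ {z | l1norm z ≤ l1norm z₀} with hK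
  have hKclosed : IsClosed K :=
    (isClosed_le hψc continuous_const).inter (isClosed_le l1_continuous continuous_const)
  have hKsub : K ⊆ Metric.closedBall 0 (l1norm z₀) := by
    rintro z ⟨_, hz2⟩
    rw [Metric.mem_closedBall, dist_zero_right,
      pi_norm_le_iff_of_nonneg (l1_nonneg z₀)]
    intro i
    calc ‖z i‖ = |z i| := rfl
      _ ≤ l1norm z := abs_le_l1 z i
      _ ≤ l1norm z₀ := hz2
  have hKcomp : IsCompact K :=
    IsCompact.of_isClosed_subset (isCompact_closedBall 0 (l1norm z₀)) hKclosed hKsub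
  have hKne : K.Nonempty := ⟨z₀, hψz₀, le_refl (l1norm z₀)⟩
  obtain ⟨xstar, hxstarK, hmin⟩ := hKcomp.exists_isMinOn hKne l1_continuous.continuousOn
  refine ⟨xstar, hxstarK.1, fun z hz => ?_⟩
  rcases le_or_gt (l1norm z) (l1norm z₀) with h | h
  · exact hmin (⟨hz, h⟩ : z ∈ K)
  · calc l1norm xstar ≤ l1norm z₀ := hmin (⟨hψz₀, le_refl (l1norm z₀)⟩ : z₀ ∈ K)
      _ ≤ l1norm z := h.le

lemma exists_invertible_submatrix {m q : ℕ} (M : Matrix (Fin m) (Fin q) ℝ)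
    (hMrank : M.rank = m) :
    ∃ g : Fin m → Fin q, Function.Injective g ∧ IsUnit (M.submatrix id g) := by
  classical
  have hspan : Submodule.span ℝ (Set.range Mᵀ) = ⊤ := by
    change Submodule.span ℝ (Set.range M.col) = ⊤
    rw [← Matrix.range_mulVecLin]
    apply Submodule.eq_top_of_finrank_eq
    rw [Module.finrank_fin_fun]
    exact hMrank
  obtain ⟨b, hb_sub, hb_span, hb_ind⟩ := exists_linearIndependent ℝ (Set.range Mᵀ)
  rw [hspan] at hb_span
  have hfin : b.Finite := hb_ind.setFinite
  haveI : Fintype b := hfin.fintype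
  have hbasis : Nonempty (Module.Basis b ℝ (Fin m → ℝ)) := by
    refine ⟨Module.Basis.mk hb_ind ?_⟩
    rw [Subtype.range_coe_subtype]
    simp only [Set.setOf_mem_eq]
    rw [hb_span]
  obtain ⟨bas⟩ := hbasis
  have hcard : Fintype.card b = m := by
    have := Module.finrank_eq_card_basis bas
    rw [Module.finrank_fin_fun] at this
    omega
  have e : Fin m ≃ b := (Fintype.equivFinOfCardEq hcard).symm
  have hmem : ∀ p : Fin m, ((e p : (Fin m → ℝ))) ∈ Set.range Mᵀ := fun p => hb_sub (e p).2
  set g : Fin m → Fin q := fun p => (hmem p).choose with hg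
  have hMg : ∀ p, Mᵀ (g p) = (e p : (Fin m → ℝ)) := fun p => (hmem p).choose_spec
  have hginj : Function.Injective g := by
    intro p p' hpp
    have : (e p : (Fin m → ℝ)) = (e p' : (Fin m → ℝ)) := by
      rw [← hMg p, ← hMg p', hpp]
    exact e.injective (Subtype.val_injective this)
  have hindep : LinearIndependent ℝ (fun p : Fin m => ((M.submatrix id g)ᵀ p)) := by
    have h1 : (fun p : Fin m => ((M.submatrix id g)ᵀ p)) = fun p => (e p : (Fin m → ℝ)) := by
      funext p
      rw [← hMg p]
      funext j
      rfl
    rw [h1]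
    exact hb_ind.comp (fun p => e p) (fun p p' h => e.injective h)
  refine ⟨g, hginj, ?_⟩
  exact Matrix.mulVec_injective_iff_isUnit.mp (Matrix.mulVec_injective_iff.mpr hindep)

lemma opNorm_bddAbove {a b : ℕ} (Q : Matrix (Fin a) (Fin b) ℝ) :
    BddAbove {t : ℝ | ∃ x : Fin b → ℝ, linfnorm x ≤ 1 ∧ t = l1norm (Q.mulVec x)} := by
  refine ⟨∑ i, ∑ j, |Q i j|, fun t ht => ?_⟩
  obtain ⟨x, hx, rfl⟩ := ht
  calc l1norm (Q.mulVec x) = ∑ i, |∑ j, Q i j * x j| := rfl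
    _ ≤ ∑ i, ∑ j, |Q i j * x j| := Finset.sum_le_sum (fun i _ => Finset.abs_sum_le_sum_abs _ _)
    _ ≤ ∑ i, ∑ j, |Q i j| := by
        apply Finset.sum_le_sum; intro i _
        apply Finset.sum_le_sum; intro j _
        rw [abs_mul]
        calc |Q i j| * |x j| ≤ |Q i j| * 1 :=
          mul_le_mul_of_nonneg_left (le_trans (abs_le_linf x j) hx) (abs_nonneg _)
          _ = |Q i j| := mul_one _

lemma opNorm_pos_of_ne_zero {a b : ℕ} (Q : Matrix (Fin a) (Fin b) ℝ) (hQ : Q ≠ 0) :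
    0 < opNormInfToOne Q := by
  have hij : ∃ i j, Q i j ≠ 0 := by
    by_contra h
    push_neg at h
    exact hQ (by funext i j; exact h i j)
  obtain ⟨i, j, hij⟩ := hij
  have hmem : l1norm (Q.mulVec (stdBasis j)) ∈
      {t : ℝ | ∃ x : Fin b → ℝ, linfnorm x ≤ 1 ∧ t = l1norm (Q.mulVec x)} := by
    refine ⟨stdBasis j, ?_, rfl⟩
    apply linf_le_one_of
    intro i'
    simp only [_root_.stdBasis]
    split <;> norm_num
  have hge : opNormInfToOne Q ≥ l1norm (Q.mulVec (stdBasis j)) :=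
    le_csSup (opNorm_bddAbove Q) hmem
  have hQe : Q.mulVec (stdBasis j) = fun i' => Q i' j := by
    funext i'
    show ∑ j', Q i' j' * stdBasis j j' = Q i' j
    rw [Finset.sum_eq_single j (fun l _ hl => by simp [_root_.stdBasis, hl])
      (fun h => absurd (Finset.mem_univ j) h)]
    simp [_root_.stdBasis]
  have hl1 : l1norm (Q.mulVec (stdBasis j)) ≥ |Q i j| := by
    rw [hQe]
    exact abs_le_l1 (fun i' => Q i' j) i
  have : 0 < |Q i j| := abs_pos.mpr hij
  linarith

lemma cConst_pos {m n q : ℕ} (hm : 0 < m)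
    (M : Matrix (Fin m) (Fin q) ℝ) (A : Matrix (Fin m) (Fin n) ℝ)
    (hArank : A.rank = m) (hMrank : M.rank = m) :
    0 < cConst M A := by
  obtain ⟨g, hginj, hgunit⟩ := exists_invertible_submatrix M hMrank
  set N := M.submatrix id g with hN
  -- A * Aᵀ is invertible
  have hAAt : IsUnit (A * Aᵀ) := by
    rw [← Matrix.mulVec_surjective_iff_isUnit]
    have h1 : (A * Aᵀ).rank = m := by rw [Matrix.rank_self_mul_transpose]; exact hArank
    have h2 : LinearMap.range ((A * Aᵀ).mulVecLin) = ⊤ := by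
      apply Submodule.eq_top_of_finrank_eq
      rw [Module.finrank_fin_fun]
      exact h1
    intro v
    have : v ∈ LinearMap.range ((A * Aᵀ).mulVecLin) := by rw [h2]; trivial
    obtain ⟨w, hw⟩ := this
    exact ⟨w, hw⟩
  set B := N⁻¹ * (A * Aᵀ)⁻¹ * A with hB
  have hBne : B ≠ 0 := by
    intro hB0
    have hNdet : IsUnit N.det := (Matrix.isUnit_iff_isUnit_det N).mp hgunit
    have hWdet : IsUnit (A * Aᵀ).det := (Matrix.isUnit_iff_isUnit_det _).mp hAAt
    have h1 : N * B = (A * Aᵀ)⁻¹ * A := by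
      rw [hB, ← Matrix.mul_assoc, ← Matrix.mul_assoc, Matrix.mul_nonsing_inv N hNdet,
        Matrix.one_mul]
    have h2 : (A * Aᵀ) * (N * B) = A := by
      rw [h1, ← Matrix.mul_assoc, Matrix.mul_nonsing_inv _ hWdet, Matrix.one_mul]
    rw [hB0, Matrix.mul_zero, Matrix.mul_zero] at h2
    have : A.rank = 0 := by rw [← h2]; exact Matrix.rank_zero
    omega
  have hopos : 0 < opNormInfToOne B := opNorm_pos_of_ne_zero B hBne
  have hmem : opNormInfToOne B ∈ {t : ℝ | ∃ g : Fin m → Fin q, Function.Injective g ∧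
      IsUnit (M.submatrix id g) ∧
      t = opNormInfToOne ((M.submatrix id g)⁻¹ * (A * Aᵀ)⁻¹ * A)} :=
    ⟨g, hginj, hgunit, rfl⟩
  have hbdd : BddAbove {t : ℝ | ∃ g : Fin m → Fin q, Function.Injective g ∧
      IsUnit (M.submatrix id g) ∧
      t = opNormInfToOne ((M.submatrix id g)⁻¹ * (A * Aᵀ)⁻¹ * A)} := by
    apply Set.Finite.bddAbove
    have : {t : ℝ | ∃ g : Fin m → Fin q, Function.Injective g ∧
        IsUnit (M.submatrix id g) ∧
        t = opNormInfToOne ((M.submatrix id g)⁻¹ * (A * Aᵀ)⁻¹ * A)} ⊆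
        Set.range (fun g : Fin m → Fin q =>
          opNormInfToOne ((M.submatrix id g)⁻¹ * (A * Aᵀ)⁻¹ * A)) := by
      rintro t ⟨g, _, _, rfl⟩
      exact ⟨g, rfl⟩
    exact Set.Finite.subset (Set.finite_range _) this
  calc (0:ℝ) < opNormInfToOne B := hopos
    _ ≤ cConst M A := le_csSup hbdd hmem



set_option maxHeartbeats 2000000 in
/-- Theorem 4.5: stability of the nonlinear Dantzig selector
`min {‖z‖₁ : φ(Mᵀ(Az − y)) ≤ τ}` under the weak RSP of order `k`. -/
theorem nonlinear_DS_stability (m n q k : ℕ) (hmn : m < n) (hmq : m ≤ q)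
    (A : Matrix (Fin m) (Fin n) ℝ) (M : Matrix (Fin m) (Fin q) ℝ)
    (hArank : A.rank = m) (hMrank : M.rank = m)
    (y : Fin m → ℝ) (τ : ℝ) (hτ : 0 < τ)
    (φ : (Fin q → ℝ) → ℝ) (hφ : IsNorm φ)
    (hbasis : ∀ i : Fin q, φ (stdBasis i) = 1)
    (hdbasis : ∀ i : Fin q, dualNorm φ (stdBasis i) = 1)
    (hRSP : WeakRSP A k)
    (δ : ℝ) (hδ0 : 0 < δ) (hδτ : δ < τ) :
    ∃ (γ : ℝ) (nhat : ℕ), 0 < γ ∧ 0 < nhat ∧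
      ∀ x : Fin n → ℝ, ∃ xstar : Fin n → ℝ,
        (φ (Mᵀ.mulVec (A.mulVec xstar - y)) ≤ τ ∧
          ∀ z : Fin n → ℝ, φ (Mᵀ.mulVec (A.mulVec z - y)) ≤ τ →
            l1norm xstar ≤ l1norm z) ∧
        l2norm (x - xstar) ≤
          δ + 2 * γ * ((nhat : ℝ) * max (φ (Mᵀ.mulVec (A.mulVec x - y)) - τ) 0
                + 2 * bestKTerm k x + cConst M A * τ
                + cConst M A * φ (Mᵀ.mulVec (A.mulVec x - y))) ∧
        (φ (Mᵀ.mulVec (A.mulVec x - y)) ≤ τ →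
          l2norm (x - xstar) ≤
            δ + 2 * γ * (2 * bestKTerm k x + cConst M A * τ
                  + cConst M A * φ (Mᵀ.mulVec (A.mulVec x - y))) ∧
          l2norm (x - xstar) ≤ δ + 4 * γ * (bestKTerm k x + cConst M A * τ)) := by
  rcases Nat.eq_zero_or_pos m with hm0 | hm
  · -- degenerate case m = 0
    subst hm0
    have hMv : ∀ v : Fin 0 → ℝ, Mᵀ.mulVec v = 0 := by
      intro v
      funext i
      simp [Matrix.mulVec, dotProduct]
    have hφ0 : ∀ v : Fin 0 → ℝ, φ (Mᵀ.mulVec v) = 0 := by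
      intro v
      rw [hMv v, phi_zero hφ]
    rcases Nat.eq_zero_or_pos k with hk0 | hk
    · subst hk0
      have hc0 : (0:ℝ) ≤ cConst M A := cConst_nonneg M A
      refine ⟨1, 1, one_pos, one_pos, fun x => ⟨0, ⟨?_, ?_⟩, ?_, ?_⟩⟩
      · rw [hφ0]; exact hτ.le
      · intro z _; rw [l1_zero]; exact l1_nonneg z
      · rw [hφ0, bestK_zero_eq]
        have h1 : max ((0:ℝ) - τ) 0 = 0 := by
          rw [max_eq_right]; linarith
        rw [h1]
        have h2 : l2norm (x - 0) = l2norm x := by rw [sub_zero]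
        rw [h2]
        have h3 : l2norm x ≤ l1norm x := l2_le_l1 x
        have h4 : 0 ≤ cConst M A * τ := mul_nonneg hc0 hτ.le
        have h5 : 0 ≤ l1norm x := l1_nonneg x
        push_cast
        nlinarith
      · intro _
        rw [hφ0, bestK_zero_eq, sub_zero]
        have h3 : l2norm x ≤ l1norm x := l2_le_l1 x
        have h4 : 0 ≤ cConst M A * τ := mul_nonneg hc0 hτ.le
        have h5 : 0 ≤ l1norm x := l1_nonneg x
        constructor <;> nlinarith
    · -- k ≥ 1 : WeakRSP is contradictory when m = 0
      exfalso
      have hn : 0 < n := hmn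
      set i0 : Fin n := ⟨0, hn⟩
      obtain ⟨u, h1, -, -⟩ := hRSP {i0} ∅ (Finset.disjoint_empty_right _)
        (by simp; omega)
      have := h1 i0 (Finset.mem_singleton_self i0)
      have h0 : Aᵀ.mulVec u i0 = 0 := by
        simp [Matrix.mulVec, dotProduct]
      rw [h0] at this
      norm_num at this
  · -- main case m ≥ 1
    obtain ⟨xstar, hfeas, hopt⟩ := exists_optimal A M hArank y τ hτ φ hφ hbasis
    obtain ⟨Cs, hCs1, hCs⟩ := exists_sparse_bound A hRSP
    have hq : 0 < q := lt_of_lt_of_le hm hmq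
    have hq' : (0:ℝ) < q := by exact_mod_cast hq
    have hc : 0 < cConst M A := cConst_pos hm M A hArank hMrank
    -- a positive constant β' with β' * ‖w‖₂ ≤ φ(Mᵀ w)
    have hφlow : ∃ β' : ℝ, 0 < β' ∧ ∀ w : Fin m → ℝ, β' * l2norm w ≤ φ (Mᵀ.mulVec w) := by
      obtain ⟨β, hβ, hβle⟩ := mulVecT_lower_bound M hm hMrank
      refine ⟨β / q, by positivity, fun w => ?_⟩
      have h1 : l1norm (Mᵀ.mulVec w) ≤ q * φ (Mᵀ.mulVec w) := by
        calc l1norm (Mᵀ.mulVec w) = ∑ i, |(Mᵀ.mulVec w) i| := rfl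
          _ ≤ ∑ _i : Fin q, φ (Mᵀ.mulVec w) :=
            Finset.sum_le_sum (fun i _ => phi_abs_le hφ hdbasis _ i)
          _ = q * φ (Mᵀ.mulVec w) := by
            rw [Finset.sum_const, Finset.card_univ, Fintype.card_fin, nsmul_eq_mul]
      have h2 := hβle w
      rw [div_mul_eq_mul_div, div_le_iff₀ hq']
      calc β * l2norm w ≤ l1norm (Mᵀ.mulVec w) := h2
        _ ≤ q * φ (Mᵀ.mulVec w) := h1
        _ = φ (Mᵀ.mulVec w) * q := mul_comm _ _
    obtain ⟨β', hβ'pos, hβ'le⟩ := hφlow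
    obtain ⟨CA, hCAdef⟩ : ∃ t : ℝ, t = ∑ i, ∑ j, |A i j| := ⟨_, rfl⟩
    have hCA0 : (0:ℝ) ≤ CA := hCAdef ▸ sum_abs_nonneg A
    have hCAle : ∀ v : Fin n → ℝ, l2norm (A.mulVec v) ≤ CA * l1norm v := by
      intro v
      rw [hCAdef]
      exact l2_mulVec_le A v
    obtain ⟨K₁, hK₁def⟩ : ∃ t : ℝ, t = 1 + Cs * CA := ⟨_, rfl⟩
    have hK₁ : (1:ℝ) ≤ K₁ := by rw [hK₁def]; nlinarith
    obtain ⟨K₂, hK₂def⟩ : ∃ t : ℝ, t = Cs / β' := ⟨_, rfl⟩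
    have hK₂pos : 0 < K₂ := by rw [hK₂def]; positivity
    obtain ⟨K₃, hK₃def⟩ : ∃ t : ℝ, t = K₁ + Cs * l2norm y := ⟨_, rfl⟩
    have hy0 : 0 ≤ l2norm y := l2_nonneg y
    have hK₃ : (1:ℝ) ≤ K₃ := by rw [hK₃def]; nlinarith
    obtain ⟨Γ, hΓdef⟩ :
        ∃ t : ℝ, t = max (max (K₁/2) (K₂/(cConst M A))) ((K₃ + l2norm xstar)/((cConst M A)*τ)) :=
      ⟨_, rfl⟩
    have hΓ1 : K₁/2 ≤ Γ := by rw [hΓdef]; exact le_trans (le_max_left _ _) (le_max_left _ _)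
    have hΓ2 : K₂/(cConst M A) ≤ Γ := by
      rw [hΓdef]; exact le_trans (le_max_right _ _) (le_max_left _ _)
    have hΓ3 : (K₃ + l2norm xstar)/((cConst M A)*τ) ≤ Γ := by rw [hΓdef]; exact le_max_right _ _
    have hΓpos : 0 < Γ := lt_of_lt_of_le (by linarith : (0:ℝ) < K₁/2) hΓ1
    have hmain : ∀ x : Fin n → ℝ, l2norm (x - xstar) ≤
        Γ * (2 * bestKTerm k x + (cConst M A) * τ
          + (cConst M A) * φ (Mᵀ.mulVec (A.mulVec x - y))) := by
      intro x
      obtain ⟨σ, hσdef⟩ : ∃ t : ℝ, t = bestKTerm k x := ⟨_, rfl⟩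
      obtain ⟨φx, hφxdef⟩ : ∃ t : ℝ, t = φ (Mᵀ.mulVec (A.mulVec x - y)) := ⟨_, rfl⟩
      rw [← hσdef, ← hφxdef]
      have hσ0 : 0 ≤ σ := hσdef ▸ bestK_nonneg k x
      have hφx0 : 0 ≤ φx := hφxdef ▸ hφ.nonneg _
      obtain ⟨u, husp, hunear⟩ := bestK_exists_near k x
      have hu1 : l1norm u ≤ Cs * l2norm (A.mulVec u) := hCs u husp
      have hAdecomp : A.mulVec u = (A.mulVec (u - x)) + ((A.mulVec x - y) + y) := by
        rw [Matrix.mulVec_sub]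
        abel
      have hβ'l2 : l2norm (A.mulVec x - y) ≤ φx / β' := by
        have h := hβ'le (A.mulVec x - y)
        rw [← hφxdef] at h
        rw [le_div_iff₀ hβ'pos]
        calc l2norm (A.mulVec x - y) * β' = β' * l2norm (A.mulVec x - y) := mul_comm _ _
          _ ≤ φx := h
      have hAu : l2norm (A.mulVec u) ≤ CA * l1norm (x - u) + (φx / β' + l2norm y) := by
        have h5 : l2norm (A.mulVec (u - x)) ≤ CA * l1norm (u - x) := hCAle (u - x)
        rw [l1_neg_sub] at h5
        calc l2norm (A.mulVec u) = l2norm ((A.mulVec (u - x)) + ((A.mulVec x - y) + y)) := by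
              rw [← hAdecomp]
          _ ≤ l2norm (A.mulVec (u - x)) + l2norm ((A.mulVec x - y) + y) := l2_triangle _ _
          _ ≤ l2norm (A.mulVec (u - x)) + (l2norm (A.mulVec x - y) + l2norm y) := by
              have := l2_triangle (A.mulVec x - y) y
              linarith
          _ ≤ CA * l1norm (x - u) + (φx / β' + l2norm y) := by linarith
      have hxu_l1 : l1norm (x - u) ≤ σ + 1 := by rw [hσdef]; exact hunear
      have hxl2 : l2norm x ≤ K₁ * (σ + 1) + K₂ * φx + Cs * l2norm y := by
        have h7 : l2norm x ≤ l2norm (x - u) + l2norm u := by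
          have h8 : x = (x - u) + u := by abel
          calc l2norm x = l2norm ((x - u) + u) := by rw [← h8]
            _ ≤ _ := l2_triangle _ _
        have h9 : l2norm (x - u) ≤ l1norm (x - u) := l2_le_l1 _
        have h10 : l2norm u ≤ l1norm u := l2_le_l1 u
        have hl1xu0 : 0 ≤ l1norm (x - u) := l1_nonneg _
        have h11 : l1norm u ≤ Cs * (CA * (σ + 1) + (φx / β' + l2norm y)) := by
          calc l1norm u ≤ Cs * l2norm (A.mulVec u) := hu1
            _ ≤ Cs * (CA * l1norm (x - u) + (φx / β' + l2norm y)) :=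
                mul_le_mul_of_nonneg_left hAu (by linarith)
            _ ≤ Cs * (CA * (σ + 1) + (φx / β' + l2norm y)) := by
                apply mul_le_mul_of_nonneg_left _ (by linarith : (0:ℝ) ≤ Cs)
                nlinarith
        have h12 : Cs * (φx / β') = K₂ * φx := by
          rw [hK₂def]
          field_simp
        calc l2norm x ≤ l1norm (x - u) + l1norm u := by linarith
          _ ≤ (σ + 1) + (Cs * (CA * (σ + 1) + (φx / β' + l2norm y))) := by linarith
          _ = K₁ * (σ + 1) + Cs * (φx / β') + Cs * l2norm y := by rw [hK₁def]; ring
          _ = K₁ * (σ + 1) + K₂ * φx + Cs * l2norm y := by rw [h12]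
      have hdist : l2norm (x - xstar) ≤ l2norm x + l2norm xstar := by
        have hxx : x - xstar = x + (-1:ℝ) • xstar := by
          funext i
          simp
          ring
        rw [hxx]
        calc l2norm (x + (-1:ℝ) • xstar) ≤ l2norm x + l2norm ((-1:ℝ) • xstar) := l2_triangle _ _
          _ = l2norm x + l2norm xstar := by rw [l2_smul]; norm_num
      have hxs0 : 0 ≤ l2norm xstar := l2_nonneg xstar
      have p1 : K₁ * σ ≤ Γ * (2 * σ) := by nlinarith
      have p2 : K₂ * φx ≤ Γ * ((cConst M A) * φx) := by
        have hKc : K₂ ≤ Γ * (cConst M A) := by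
          rw [div_le_iff₀ hc] at hΓ2
          linarith
        nlinarith
      have p3 : K₃ + l2norm xstar ≤ Γ * ((cConst M A) * τ) := by
        have hcτ : 0 < (cConst M A) * τ := mul_pos hc hτ
        rw [div_le_iff₀ hcτ] at hΓ3
        linarith
      calc l2norm (x - xstar) ≤ l2norm x + l2norm xstar := hdist
        _ ≤ K₁ * (σ + 1) + K₂ * φx + Cs * l2norm y + l2norm xstar := by linarith
        _ = K₁ * σ + K₂ * φx + ((K₁ + Cs * l2norm y) + l2norm xstar) := by ring
        _ = K₁ * σ + K₂ * φx + (K₃ + l2norm xstar) := by rw [← hK₃def]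
        _ ≤ Γ * (2 * σ) + Γ * ((cConst M A) * φx) + Γ * ((cConst M A) * τ) := by linarith
        _ = Γ * (2 * σ + (cConst M A) * τ + (cConst M A) * φx) := by ring
    refine ⟨Γ, 1, hΓpos, one_pos, fun x => ⟨xstar, ⟨hfeas, hopt⟩, ?_, ?_⟩⟩
    · have hm1 := hmain x
      have hσ0 : 0 ≤ bestKTerm k x := bestK_nonneg k x
      have hφx0 : 0 ≤ φ (Mᵀ.mulVec (A.mulVec x - y)) := hφ.nonneg _
      have hmax0 : (0:ℝ) ≤ max (φ (Mᵀ.mulVec (A.mulVec x - y)) - τ) 0 := le_max_right _ _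
      have hYnn : 0 ≤ 2 * bestKTerm k x + (cConst M A) * τ
          + (cConst M A) * φ (Mᵀ.mulVec (A.mulVec x - y)) := by
        have := mul_pos hc hτ
        have := mul_nonneg hc.le hφx0
        linarith
      push_cast
      nlinarith [mul_nonneg hΓpos.le hmax0, mul_nonneg hΓpos.le hYnn]
    · intro hfx
      have hm1 := hmain x
      have hσ0 : 0 ≤ bestKTerm k x := bestK_nonneg k x
      have hφx0 : 0 ≤ φ (Mᵀ.mulVec (A.mulVec x - y)) := hφ.nonneg _
      have hYnn : 0 ≤ 2 * bestKTerm k x + (cConst M A) * τ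
          + (cConst M A) * φ (Mᵀ.mulVec (A.mulVec x - y)) := by
        have := mul_pos hc hτ
        have := mul_nonneg hc.le hφx0
        linarith
      constructor
      · nlinarith [mul_nonneg hΓpos.le hYnn]
      · have hcd : 0 ≤ (cConst M A) * τ - (cConst M A) * φ (Mᵀ.mulVec (A.mulVec x - y)) := by
          nlinarith
        nlinarith [mul_nonneg hΓpos.le hcd, mul_nonneg hΓpos.le hYnn]
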